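/- Let l and m be positive integers, p > 0 with m > p + 1 + 2l, let f: ℝ → ℝ satisfy hypothesis H(m) with x ↦ x·f(x) absolutely integrable, let θ ∈ {e,o}, and let k be a nonnegative integer with k + 2 ≤ 2l. Then the planar vector field V(x,σ) = ( -∂^{k+1}Ψ_p^θ/∂x^k∂σ (x,σ), ∂^{k+1}Ψ_p^θ/∂x^{k+1} (x,σ) ) is globally Lipschitz and complete: for every (x₀,σ₀) ∈ ℝ² there exists a curve γ: ℝ → ℝ² with γ(0) = (x₀,σ₀) and γ'(t) = V(γ(t)) for every t ∈ ℝ (every trajectory of V extends to all of ℝ). -/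

import Mathlib

open MeasureTheory Filter

/-- Even kernel `Λ_p^e`. -/
noncomputable def LamE (p : ℝ) (z : ℝ) : ℝ :=
  (1 / Real.sqrt (2 * Real.pi)) *
    ∑' n : ℕ, (-1 : ℝ) ^ n * (∏ k ∈ Finset.range n, (p + 2 * (k : ℝ) + 1)) *
      z ^ (2 * n) / (Nat.factorial (2 * n) : ℝ)

/-- Odd kernel `Λ_p^o`. -/
noncomputable def LamO (p : ℝ) (z : ℝ) : ℝ :=
  (1 / Real.sqrt (2 * Real.pi)) *
    ∑' n : ℕ, (-1 : ℝ) ^ n * (∏ k ∈ Finset.range (n + 1), (p + 2 * (k : ℝ))) *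
      z ^ (2 * n + 1) / (Nat.factorial (2 * n + 1) : ℝ)

/-- Fourier transform of a real-valued integrable function. -/
noncomputable def FT (g : ℝ → ℝ) (ω : ℝ) : ℂ :=
  ∫ x : ℝ, (g x : ℂ) * Complex.exp (-(Complex.I * ω * x))

/-- Parity index. -/
inductive Theta | e | o

/-- The kernel of parity `θ`. -/
noncomputable def Lam : Theta → ℝ → ℝ → ℝ
  | Theta.e => LamE
  | Theta.o => LamO

/-- The convolution `φ_p^θ(x,ρ)`. -/
noncomputable def phi (f : ℝ → ℝ) (θ : Theta) (p x ρ : ℝ) : ℝ :=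
  ∫ ν : ℝ, f (x - ν) * ρ ^ (p + 1) * Lam θ p (ν * ρ)

/-- The multiplier `M_p^θ(ω)`. -/
noncomputable def Mker (θ : Theta) (c d p : ℝ) (ω : ℝ) : ℂ :=
  match θ with
  | Theta.e => ((c * |ω| ^ p : ℝ) : ℂ)
  | Theta.o => Complex.I * (d : ℂ) * ((Real.sign ω : ℝ) : ℂ) * ((|ω| ^ p : ℝ) : ℂ)

/-- Hypothesis H(m). -/
def HypH (m : ℕ) (f : ℝ → ℝ) : Prop :=
  ContDiff ℝ m f ∧ ∀ i : ℕ, i ≤ m → MeasureTheory.Integrable (iteratedDeriv i f)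

/-- Fourier transform of a complex-valued function. -/
noncomputable def FTc (g : ℝ → ℂ) (ω : ℝ) : ℂ :=
  ∫ x : ℝ, g x * Complex.exp (-(Complex.I * ω * x))

/-- The limit `f_p^θ(x)`. -/
noncomputable def flim (f : ℝ → ℝ) (θ : Theta) (c d p : ℝ) (x : ℝ) : ℝ :=
  (((1 / (2 * Real.pi) : ℝ) : ℂ) *
    ∫ ω : ℝ, FT f ω * Mker θ c d p ω * Complex.exp (Complex.I * ω * x)).re

/-- The scale-space function `Ψ_p^θ(x,σ)`. -/
noncomputable def Psi (f : ℝ → ℝ) (θ : Theta) (c d p : ℝ) (x σ : ℝ) : ℝ :=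
  (((1 / (2 * Real.pi) : ℝ) : ℂ) *
    ∫ ω : ℝ, FT f ω * Mker θ c d p ω * ((Real.exp (-(ω ^ 2 * σ ^ 2) / 2) : ℝ) : ℂ) *
      Complex.exp (Complex.I * ω * x)).re

open Set


theorem lipschitz_local_sol {E : Type*} [NormedAddCommGroup E] [NormedSpace ℝ E]
    [CompleteSpace E] {V : E → E} {K : NNReal} (hV : LipschitzWith K V)
    (t₀ tMin tMax : ℝ) (ht₀ : t₀ ∈ Icc tMin tMax)
    (hlen : tMax - tMin ≤ 1 / ((K : ℝ) + 1)) (x₀ : E) :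
    ∃ δ : ℝ → E, δ t₀ = x₀ ∧ ∀ t ∈ Icc tMin tMax,
      HasDerivWithinAt δ (V (δ t)) (Icc tMin tMax) t := by
  have hK : (0:ℝ) ≤ K := K.coe_nonneg
  have hR : (0:ℝ) ≤ ‖V x₀‖ + 1 := by positivity
  have hpl : IsPicardLindelof (fun _ => V) (⟨t₀, ht₀⟩ : Icc tMin tMax) x₀ (‖V x₀‖₊ + 1) 0
      (‖V x₀‖₊ + K * (‖V x₀‖₊ + 1)) K := by
    refine ⟨fun t _ => hV.lipschitzOnWith, fun x _ => continuousOn_const,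
      fun t _ x hx => ?_, ?_⟩
    · simp only [NNReal.coe_add, NNReal.coe_mul, coe_nnnorm, NNReal.coe_one]
      have h1 : ‖V x‖ - ‖V x₀‖ ≤ ‖V x - V x₀‖ := norm_sub_norm_le _ _
      have h2 : ‖V x - V x₀‖ ≤ K * ‖x - x₀‖ := by
        simpa [dist_eq_norm] using hV.dist_le_mul x x₀
      have h3 : ‖x - x₀‖ ≤ ‖V x₀‖ + 1 := by
        have := Metric.mem_closedBall.mp hx
        simp only [NNReal.coe_add, coe_nnnorm, NNReal.coe_one] at this
        rwa [dist_eq_norm] at this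
      nlinarith
    · simp only [NNReal.coe_add, NNReal.coe_mul, coe_nnnorm, NNReal.coe_one,
        NNReal.coe_zero, sub_zero]
      have hmax : max (tMax - t₀) (t₀ - tMin) ≤ 1 / ((K : ℝ) + 1) := by
        apply max_le <;> [linarith [ht₀.1]; linarith [ht₀.2]]
      have hmax0 : 0 ≤ max (tMax - t₀) (t₀ - tMin) :=
        le_max_iff.2 (Or.inl (by linarith [ht₀.2]))
      have hC : (0:ℝ) ≤ ‖V x₀‖ + K * (‖V x₀‖ + 1) := by positivity
      calc (‖V x₀‖ + K * (‖V x₀‖ + 1)) * max (tMax - t₀) (t₀ - tMin)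
          ≤ (‖V x₀‖ + K * (‖V x₀‖ + 1)) * (1 / ((K : ℝ) + 1)) :=
            mul_le_mul_of_nonneg_left hmax hC
        _ ≤ ‖V x₀‖ + 1 := by
            rw [mul_one_div, div_le_iff₀ (by positivity)]
            nlinarith [norm_nonneg (V x₀)]
  exact hpl.exists_eq_forall_mem_Icc_hasDerivWithinAt₀

theorem lipschitz_global_flow {E : Type*} [NormedAddCommGroup E] [NormedSpace ℝ E]
    [CompleteSpace E] {V : E → E} {K : NNReal} (hV : LipschitzWith K V) (q₀ : E) :
    ∃ γ : ℝ → E, γ 0 = q₀ ∧ ∀ t : ℝ, HasDerivAt γ (V (γ t)) t := by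
  set ε : ℝ := 1 / ((K : ℝ) + 1) with hεdef
  have hε : (0:ℝ) < ε := by positivity
  -- solutions on Icc (-(n*ε)) (n*ε)
  have main : ∀ n : ℕ, ∃ γ : ℝ → E, γ 0 = q₀ ∧
      ∀ t ∈ Icc (-((n:ℝ)*ε)) ((n:ℝ)*ε),
        HasDerivWithinAt γ (V (γ t)) (Icc (-((n:ℝ)*ε)) ((n:ℝ)*ε)) t := by
    intro n
    induction n with
    | zero =>
      obtain ⟨δ, hδ0, hδ⟩ := lipschitz_local_sol hV 0 0 0 (by simp) (by rw [sub_self]; exact hε.le) q₀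
      refine ⟨δ, hδ0, ?_⟩
      simpa using hδ
    | succ n ih =>
      obtain ⟨γ, hγ0, hγ⟩ := ih
      set a : ℝ := (n:ℝ) * ε with hadef
      have ha : 0 ≤ a := by positivity
      obtain ⟨δp, hδp0, hδp⟩ := lipschitz_local_sol hV a a (a+ε)
        ⟨le_refl a, by linarith⟩ (by linarith [hεdef.le]) (γ a)
      obtain ⟨δm, hδm0, hδm⟩ := lipschitz_local_sol hV (-a) (-(a+ε)) (-a)
        ⟨by linarith, le_refl _⟩ (by linarith [hεdef.le]) (γ (-a))
      set γ' : ℝ → E := fun t => if t < -a then δm t else if t ≤ a then γ t else δp t with hγ'def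
      have hcast : ((n+1 : ℕ):ℝ) * ε = a + ε := by push_cast; ring
      have heq_mid : ∀ s ∈ Icc (-a) a, γ' s = γ s := by
        intro s hs
        simp only [hγ'def]
        rw [if_neg (not_lt.2 hs.1), if_pos hs.2]
      have heq_left : ∀ s ∈ Icc (-(a+ε)) (-a), γ' s = δm s := by
        intro s hs
        rcases lt_or_eq_of_le hs.2 with h | h
        · simp only [hγ'def]; rw [if_pos h]
        · subst h
          simp only [hγ'def]
          rw [if_neg (lt_irrefl _), if_pos (by linarith), hδm0]
      have heq_right : ∀ s ∈ Icc a (a+ε), γ' s = δp s := by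
        intro s hs
        rcases lt_or_eq_of_le hs.1 with h | h
        · simp only [hγ'def]
          rw [if_neg (by push_neg; linarith), if_neg (not_le.2 h)]
        · rw [← h]
          simp only [hγ'def]
          rw [if_neg (by push_neg; linarith), if_pos le_rfl, ← hδp0]
      refine ⟨γ', ?_, ?_⟩
      · rw [heq_mid 0 ⟨by linarith, ha⟩, hγ0]
      · rw [hcast]
        have hset : Icc (-(a+ε)) (-a) ∪ Icc (-a) a ∪ Icc a (a+ε) = Icc (-(a+ε)) (a+ε) := by
          rw [Icc_union_Icc_eq_Icc (by linarith) (by linarith),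
            Icc_union_Icc_eq_Icc (by linarith) (by linarith)]
        intro t ht
        have piece : ∀ (I : Set ℝ) (u : ℝ → E), (∀ s ∈ I, γ' s = u s) → IsClosed I →
            (∀ s ∈ I, HasDerivWithinAt u (V (u s)) I s) →
            HasDerivWithinAt γ' (V (γ' t)) I t := by
          intro I u hu hIc hud
          by_cases htI : t ∈ I
          · rw [hu t htI]
            exact (hud t htI).congr (fun s hs => hu s hs) (hu t htI)
          · rw [hasDerivWithinAt_iff_hasFDerivWithinAt]
            exact HasFDerivWithinAt.of_notMem_closure (by rwa [hIc.closure_eq])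
        have h₁ := piece _ _ heq_left isClosed_Icc hδm
        have h₂ := piece _ _ heq_mid isClosed_Icc hγ
        have h₃ := piece _ _ heq_right isClosed_Icc hδp
        have := (h₁.union h₂).union h₃
        rwa [hset] at this
  choose Γ hΓ0 hΓ using main
  have hΓcont : ∀ n : ℕ, ContinuousOn (Γ n) (Icc (-((n:ℝ)*ε)) ((n:ℝ)*ε)) := by
    intro n t ht
    exact (hΓ n t ht).continuousWithinAt
  have agree : ∀ (nm nn : ℕ) (t : ℝ), |t| ≤ (nm:ℝ)*ε → |t| ≤ (nn:ℝ)*ε → Γ nm t = Γ nn t := by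
    intro nm nn t h1 h2
    set b : ℝ := min ((nm:ℝ)*ε) ((nn:ℝ)*ε) with hbdef
    have hb0 : 0 ≤ b := le_min (by positivity) (by positivity)
    have htb : |t| ≤ b := le_min h1 h2
    rcases eq_or_lt_of_le hb0 with hb | hb
    · have ht0 : t = 0 := by
        have : |t| ≤ 0 := by rw [hb]; exact htb
        simpa using le_antisymm this (abs_nonneg t)
      rw [ht0, hΓ0, hΓ0]
    · have key : ∀ j : ℕ, b ≤ (j:ℝ)*ε → (∀ t' ∈ Ioo (-b) b, HasDerivAt (Γ j) (V (Γ j t')) t')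
          ∧ ContinuousOn (Γ j) (Icc (-b) b) := by
        intro j hj
        constructor
        · intro t' ht'
          have ht'j : t' ∈ Icc (-((j:ℝ)*ε)) ((j:ℝ)*ε) :=
            ⟨by linarith [ht'.1], by linarith [ht'.2]⟩
          exact (hΓ j t' ht'j).hasDerivAt
            (Icc_mem_nhds (by linarith [ht'.1]) (by linarith [ht'.2]))
        · exact (hΓcont j).mono (Icc_subset_Icc (by linarith) hj)
      have km := key nm (min_le_left _ _)
      have kn := key nn (min_le_right _ _)
      have huniq := ODE_solution_unique_of_mem_Icc
        (v := fun _ x => V x) (s := fun _ => univ)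
        (fun t _ => hV.lipschitzOnWith) (t₀ := 0) (a := -b) (b := b)
        ⟨by linarith, hb⟩ km.2 (fun t' ht' => km.1 t' ht') (fun _ _ => mem_univ _)
        kn.2 (fun t' ht' => kn.1 t' ht') (fun _ _ => mem_univ _)
        (by rw [hΓ0, hΓ0])
      exact huniq (abs_le.1 htb)
  set N : ℝ → ℕ := fun t => ⌊|t|/ε⌋₊ + 1 with hNdef
  have hNlt : ∀ t : ℝ, |t| < (N t : ℝ) * ε := by
    intro t
    have := Nat.lt_floor_add_one (|t|/ε)
    rw [div_lt_iff₀ hε] at this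
    simpa [hNdef] using this
  refine ⟨fun t => Γ (N t) t, ?_, ?_⟩
  · show Γ (N 0) 0 = q₀
    rw [hΓ0]
  · intro t
    set n := N t with hn
    have ht := hNlt t
    have hmem : t ∈ Icc (-((n:ℝ)*ε)) ((n:ℝ)*ε) := by
      constructor <;> [linarith [abs_le.1 (le_of_lt ht) |>.1]; linarith [abs_le.1 (le_of_lt ht) |>.2]]
    have hd : HasDerivAt (Γ n) (V (Γ n t)) t :=
      (hΓ n t hmem).hasDerivAt
        (Icc_mem_nhds (by linarith [(abs_lt.1 ht).1]) (by linarith [(abs_lt.1 ht).2]))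
    have hev : (fun s => Γ (N s) s) =ᶠ[nhds t] Γ n := by
      have hmem' : Ioo (-((n:ℝ)*ε)) ((n:ℝ)*ε) ∈ nhds t := Ioo_mem_nhds (abs_lt.1 ht).1 (abs_lt.1 ht).2
      filter_upwards [hmem'] with s hs
      exact agree (N s) n s (le_of_lt (hNlt s)) (le_of_lt (abs_lt.2 ⟨hs.1, hs.2⟩))
    have heqt : Γ n t = Γ (N t) t := rfl
    exact (hd.congr_of_eventuallyEq hev).congr_deriv (by rw [heqt])


lemma FT_eq (h : ℝ → ℝ) (ω : ℝ) :
    FT h ω = FourierTransform.fourier (fun x => ((h x : ℝ) : ℂ)) (ω / (2 * Real.pi)) := by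
  rw [Real.fourier_eq']
  unfold FT
  congr 1
  funext v
  simp only [RCLike.inner_apply, conj_trivial, smul_eq_mul]
  rw [mul_comm]
  congr 1
  have hπ : Real.pi ≠ 0 := Real.pi_ne_zero
  have : -2 * Real.pi * (ω / (2 * Real.pi) * v) = -(ω * v) := by field_simp
  rw [this]
  push_cast
  ring

lemma FT_cont (h : ℝ → ℝ) (hint : Integrable h) : Continuous (FT h) := by
  have h1 : Continuous (FourierTransform.fourier fun x => ((h x : ℝ) : ℂ)) := by
    exact VectorFourier.fourierIntegral_continuous Real.continuous_fourierChar
      continuous_inner hint.ofReal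
  have h2 : FT h = fun ω => FourierTransform.fourier (fun x => ((h x : ℝ) : ℂ)) (ω / (2 * Real.pi)) :=
    funext (FT_eq h)
  rw [h2]
  exact h1.comp (continuous_id.div_const _)

lemma iteratedDeriv_ofReal : ∀ (n : ℕ) (u : ℝ → ℝ), ContDiff ℝ n u →
    iteratedDeriv n (fun x => ((u x : ℝ) : ℂ)) = fun x => ((iteratedDeriv n u x : ℝ) : ℂ) := by
  intro n
  induction n with
  | zero => intro u _; simp
  | succ n ih =>
    intro u hu
    have hu' : ContDiff ℝ ((n : WithTop ℕ∞) + 1) u := by exact_mod_cast hu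
    rw [iteratedDeriv_succ', iteratedDeriv_succ']
    have hd : (deriv fun x => ((u x : ℝ) : ℂ)) = fun x => ((deriv u x : ℝ) : ℂ) := by
      funext x
      have hx : DifferentiableAt ℝ u x :=
        ((contDiff_succ_iff_deriv.mp hu').1 x)
      exact (hx.hasDerivAt.ofReal_comp).deriv
    rw [hd, ih (deriv u) (contDiff_succ_iff_deriv.mp hu').2.2]

lemma FT_norm_le (h : ℝ → ℝ) (hint : Integrable h) (ω : ℝ) :
    ‖FT h ω‖ ≤ ∫ x : ℝ, |h x| := by
  unfold FT
  apply norm_integral_le_of_norm_le hint.abs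
  apply Filter.Eventually.of_forall
  intro x
  rw [norm_mul, Complex.norm_real, Real.norm_eq_abs]
  have : ‖Complex.exp (-(Complex.I * ω * x))‖ = 1 := by
    rw [Complex.norm_exp]
    simp
  rw [this, mul_one]

section Decay

variable {m : ℕ} {f : ℝ → ℝ} (hfc : ContDiff ℝ m f)
  (hfi : ∀ i : ℕ, i ≤ m → Integrable (iteratedDeriv i f))

include hfc hfi

lemma FT_deriv_pow (ω : ℝ) :
    FT (iteratedDeriv m f) ω = (Complex.I * ω) ^ m * FT f ω := by
  rw [FT_eq, FT_eq]
  have key := Real.fourier_iteratedDeriv (N := (m : ℕ∞)) (n := m)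
    (f := fun x => ((f x : ℝ) : ℂ))
    (Complex.ofRealCLM.contDiff.comp hfc)
    (fun n hn => by
      have hn' : n ≤ m := by exact_mod_cast hn
      rw [iteratedDeriv_ofReal n f (hfc.of_le (by exact_mod_cast hn'))]
      exact (hfi n hn').ofReal)
    le_rfl
  rw [← iteratedDeriv_ofReal m f hfc, key]
  simp only [smul_eq_mul]
  congr 1
  have hπ : (Real.pi : ℂ) ≠ 0 := by exact_mod_cast Real.pi_ne_zero
  rw [Complex.ofReal_div]
  push_cast
  congr 1
  field_simp

lemma FT_decay (ω : ℝ) :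
    ‖FT f ω‖ * |ω| ^ m ≤ ∫ x : ℝ, |iteratedDeriv m f x| := by
  have h1 := FT_deriv_pow hfc hfi ω
  have h2 := FT_norm_le (iteratedDeriv m f) (hfi m le_rfl) ω
  rw [h1, norm_mul, norm_pow] at h2
  have h3 : ‖Complex.I * (ω : ℂ)‖ = |ω| := by
    rw [norm_mul, Complex.norm_I, one_mul, Complex.norm_real, Real.norm_eq_abs]
  rw [h3] at h2
  linarith [h2]

lemma integrable_FT_weight (s : ℝ) (hs : 0 < s) (hsm : s < (m : ℝ) - 1) :
    Integrable (fun ω : ℝ => ‖FT f ω‖ * |ω| ^ s) := by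
  have hf_int : Integrable f := by
    have := hfi 0 (Nat.zero_le m)
    simpa [iteratedDeriv_zero] using this
  have hcont : Continuous fun ω : ℝ => ‖FT f ω‖ * |ω| ^ s :=
    (FT_cont f hf_int).norm.mul (continuous_abs.rpow_const (fun x => Or.inr hs.le))
  set A : ℝ := ∫ x : ℝ, |iteratedDeriv m f x| with hA
  have hA0 : 0 ≤ A := integral_nonneg (fun x => abs_nonneg _)
  have htail : ∀ x : ℝ, 1 ≤ |x| → ‖FT f x‖ * |x| ^ s ≤ A * |x| ^ (s - (m : ℝ)) := by
    intro x hx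
    have hxpos : (0:ℝ) < |x| := lt_of_lt_of_le one_pos hx
    have hd := FT_decay hfc hfi x
    have hpow : |x| ^ (s - (m : ℝ)) = |x| ^ s / |x| ^ (m : ℕ) := by
      rw [Real.rpow_sub hxpos, Real.rpow_natCast]
    have hd' : ‖FT f x‖ * |x| ^ (m:ℕ) ≤ A := by rw [hA]; exact hd
    rw [hpow, ← mul_div_assoc, le_div_iff₀ (by positivity)]
    calc ‖FT f x‖ * |x| ^ s * |x| ^ (m:ℕ) = (‖FT f x‖ * |x| ^ (m:ℕ)) * |x| ^ s := by ring
      _ ≤ A * |x| ^ s := mul_le_mul_of_nonneg_right hd' (Real.rpow_nonneg (abs_nonneg _) _)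
  have hsm' : s - (m : ℝ) < -1 := by linarith
  have h2 : IntegrableOn (fun ω : ℝ => ‖FT f ω‖ * |ω| ^ s) (Ioi 1) := by
    apply Integrable.mono' ((integrableOn_Ioi_rpow_of_lt hsm' one_pos).const_mul A)
      (hcont.aestronglyMeasurable.restrict)
    rw [ae_restrict_iff' measurableSet_Ioi]
    apply Filter.Eventually.of_forall
    intro x hx
    have hx1 : (1:ℝ) ≤ |x| := by
      rw [abs_of_pos (lt_trans one_pos hx)]; exact le_of_lt hx
    have := htail x hx1
    rw [Real.norm_eq_abs, abs_of_nonneg (by positivity)]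
    calc ‖FT f x‖ * |x| ^ s ≤ A * |x| ^ (s - (m:ℝ)) := this
      _ = A * x ^ (s - (m:ℝ)) := by rw [abs_of_pos (lt_trans one_pos hx)]
  have h3 : IntegrableOn (fun ω : ℝ => ‖FT f ω‖ * |ω| ^ s) (Iio (-1)) := by
    have hneg : IntegrableOn (fun x : ℝ => (-x) ^ (s - (m : ℝ))) (Iio (-1)) := by
      rw [← (Measure.measurePreserving_neg (volume : Measure ℝ)).integrableOn_comp_preimage
          (Homeomorph.neg ℝ).measurableEmbedding]
      simp only [Function.comp_def, neg_neg, neg_preimage, neg_Iio]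
      exact integrableOn_Ioi_rpow_of_lt hsm' one_pos
    apply Integrable.mono' (hneg.const_mul A) (hcont.aestronglyMeasurable.restrict)
    rw [ae_restrict_iff' measurableSet_Iio]
    apply Filter.Eventually.of_forall
    intro x hx
    have hxneg : x < -1 := hx
    have hx1 : (1:ℝ) ≤ |x| := by
      rw [abs_of_neg (by linarith)]; linarith
    have := htail x hx1
    rw [Real.norm_eq_abs, abs_of_nonneg (by positivity)]
    calc ‖FT f x‖ * |x| ^ s ≤ A * |x| ^ (s - (m:ℝ)) := this
      _ = A * (-x) ^ (s - (m:ℝ)) := by rw [abs_of_neg (by linarith)]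
  have h1 : IntegrableOn (fun ω : ℝ => ‖FT f ω‖ * |ω| ^ s) (Icc (-1) 1) :=
    hcont.continuousOn.integrableOn_Icc
  have huniv : (univ : Set ℝ) = Iio (-1) ∪ (Icc (-1) 1 ∪ Ioi 1) := by
    ext x
    simp only [mem_univ, mem_union, mem_Iio, mem_Icc, mem_Ioi, true_iff]
    rcases lt_or_ge x (-1) with h | h
    · exact Or.inl h
    · rcases le_or_gt x 1 with h' | h'
      · exact Or.inr (Or.inl ⟨h, h'⟩)
      · exact Or.inr (Or.inr h')
  rw [← integrableOn_univ, huniv]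
  exact h3.union (h1.union h2)

end Decay


noncomputable def EE (g : ℝ → ℂ) (j : ℕ) (x σ : ℝ) : ℂ :=
  ∫ ω : ℝ, g ω * (Complex.I * ω) ^ j * ((Real.exp (-(ω ^ 2 * σ ^ 2) / 2) : ℝ) : ℂ) *
    Complex.exp (Complex.I * ω * x)

noncomputable def ES (g : ℝ → ℂ) (j : ℕ) (x σ : ℝ) : ℂ :=
  ∫ ω : ℝ, g ω * (Complex.I * ω) ^ j *
    ((-(ω ^ 2 * σ) * Real.exp (-(ω ^ 2 * σ ^ 2) / 2) : ℝ) : ℂ) * Complex.exp (Complex.I * ω * x)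

lemma helper1 (u : ℝ) : |u| * Real.exp (-(u ^ 2) / 2) ≤ 1 := by
  have ht : |u| ≤ Real.exp (u ^ 2 / 2) := by
    nlinarith [Real.add_one_le_exp (u ^ 2 / 2), sq_nonneg (|u| - 1), _root_.sq_abs u, abs_nonneg u]
  calc |u| * Real.exp (-(u ^ 2) / 2) ≤ Real.exp (u ^ 2 / 2) * Real.exp (-(u ^ 2) / 2) :=
        mul_le_mul_of_nonneg_right ht (Real.exp_nonneg _)
    _ = 1 := by
        rw [← Real.exp_add, show u ^ 2 / 2 + -(u ^ 2) / 2 = 0 by ring, Real.exp_zero]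

lemma helper2 (u : ℝ) : |u ^ 2 - 1| * Real.exp (-(u ^ 2) / 2) ≤ 1 := by
  have h4 : Real.exp (u ^ 2 / 2) = Real.exp (u ^ 2 / 4) * Real.exp (u ^ 2 / 4) := by
    rw [← Real.exp_add]; ring_nf
  have h5 := Real.add_one_le_exp (u ^ 2 / 4)
  have h6 : (u ^ 2 / 4 + 1) * (u ^ 2 / 4 + 1) ≤ Real.exp (u ^ 2 / 4) * Real.exp (u ^ 2 / 4) :=
    mul_le_mul h5 h5 (by positivity) (Real.exp_pos _).le
  have h7 : (1:ℝ) ≤ Real.exp (u ^ 2 / 2) := Real.one_le_exp (by positivity)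
  have habs : |u ^ 2 - 1| ≤ Real.exp (u ^ 2 / 2) := by
    rw [abs_le]
    constructor
    · nlinarith [sq_nonneg u]
    · nlinarith [sq_nonneg (u ^ 2 / 4 - 1)]
  calc |u ^ 2 - 1| * Real.exp (-(u ^ 2) / 2)
      ≤ Real.exp (u ^ 2 / 2) * Real.exp (-(u ^ 2) / 2) :=
        mul_le_mul_of_nonneg_right habs (Real.exp_nonneg _)
    _ = 1 := by
        rw [← Real.exp_add, show u ^ 2 / 2 + -(u ^ 2) / 2 = 0 by ring, Real.exp_zero]

lemma gauss_sigma_le (ω s : ℝ) : |(-(ω ^ 2 * s)) * Real.exp (-(ω ^ 2 * s ^ 2) / 2)| ≤ |ω| := by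
  have h := helper1 (ω * s)
  have e1 : -(ω ^ 2 * s ^ 2) / 2 = -((ω * s) ^ 2) / 2 := by ring
  rw [e1, show (-(ω ^ 2 * s)) * Real.exp (-((ω * s) ^ 2) / 2)
      = -(ω * ((ω * s) * Real.exp (-((ω * s) ^ 2) / 2))) by ring, abs_neg, abs_mul, abs_mul,
    _root_.abs_of_nonneg (Real.exp_nonneg _)]
  calc |ω| * (|ω * s| * Real.exp (-((ω * s) ^ 2) / 2)) ≤ |ω| * 1 :=
        mul_le_mul_of_nonneg_left h (abs_nonneg _)
    _ = |ω| := mul_one _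

lemma gauss_le_one (t : ℝ) (ht : 0 ≤ t) : Real.exp (-t / 2) ≤ 1 := by
  rw [Real.exp_le_one_iff]
  linarith

lemma norm_cexp_I (z : ℝ) : ‖Complex.exp (Complex.I * z)‖ = 1 := by
  rw [Complex.norm_exp]
  simp

lemma norm_cexp_I_mul (ω x : ℝ) : ‖Complex.exp (Complex.I * ω * x)‖ = 1 := by
  rw [Complex.norm_exp]
  simp

lemma norm_I_omega_pow (ω : ℝ) (j : ℕ) : ‖(Complex.I * (ω:ℂ)) ^ j‖ = |ω| ^ j := by
  rw [norm_pow]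
  congr 1
  rw [norm_mul, Complex.norm_I, one_mul, Complex.norm_real, Real.norm_eq_abs]

lemma norm_EE_integrand (g : ℝ → ℂ) (j : ℕ) (x σ ω : ℝ) :
    ‖g ω * (Complex.I * ω) ^ j * ((Real.exp (-(ω ^ 2 * σ ^ 2) / 2) : ℝ) : ℂ) *
      Complex.exp (Complex.I * ω * x)‖ ≤ ‖g ω‖ * |ω| ^ j := by
  rw [norm_mul, norm_mul, norm_mul, norm_I_omega_pow, norm_cexp_I_mul, mul_one,
    Complex.norm_real, Real.norm_eq_abs, _root_.abs_of_nonneg (Real.exp_nonneg _)]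
  have h1 : Real.exp (-(ω ^ 2 * σ ^ 2) / 2) ≤ 1 := gauss_le_one _ (by positivity)
  calc ‖g ω‖ * |ω| ^ j * Real.exp (-(ω ^ 2 * σ ^ 2) / 2) ≤ ‖g ω‖ * |ω| ^ j * 1 := by
        apply mul_le_mul_of_nonneg_left h1 (by positivity)
    _ = ‖g ω‖ * |ω| ^ j := mul_one _

lemma norm_ES_integrand (g : ℝ → ℂ) (j : ℕ) (x σ ω : ℝ) :
    ‖g ω * (Complex.I * ω) ^ j * ((-(ω ^ 2 * σ) * Real.exp (-(ω ^ 2 * σ ^ 2) / 2) : ℝ) : ℂ) *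
      Complex.exp (Complex.I * ω * x)‖ ≤ ‖g ω‖ * |ω| ^ (j + 1) := by
  rw [norm_mul, norm_mul, norm_mul, norm_I_omega_pow, norm_cexp_I_mul, mul_one,
    Complex.norm_real, Real.norm_eq_abs]
  have h1 := gauss_sigma_le ω σ
  calc ‖g ω‖ * |ω| ^ j * |(-(ω ^ 2 * σ)) * Real.exp (-(ω ^ 2 * σ ^ 2) / 2)|
      ≤ ‖g ω‖ * |ω| ^ j * |ω| := mul_le_mul_of_nonneg_left h1 (by positivity)
    _ = ‖g ω‖ * |ω| ^ (j + 1) := by rw [pow_succ, mul_assoc]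

section Core

variable {g : ℝ → ℂ} (hg : AEStronglyMeasurable g (volume : Measure ℝ))

include hg

lemma meas_EE (j : ℕ) (x σ : ℝ) :
    AEStronglyMeasurable (fun ω : ℝ => g ω * (Complex.I * ω) ^ j *
      ((Real.exp (-(ω ^ 2 * σ ^ 2) / 2) : ℝ) : ℂ) * Complex.exp (Complex.I * ω * x)) volume := by
  apply AEStronglyMeasurable.mul
  apply AEStronglyMeasurable.mul
  apply AEStronglyMeasurable.mul hg
  · exact (Continuous.aestronglyMeasurable (by continuity))
  · exact (Continuous.aestronglyMeasurable (by continuity))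
  · exact (Continuous.aestronglyMeasurable (by continuity))

lemma meas_ES (j : ℕ) (x σ : ℝ) :
    AEStronglyMeasurable (fun ω : ℝ => g ω * (Complex.I * ω) ^ j *
      ((-(ω ^ 2 * σ) * Real.exp (-(ω ^ 2 * σ ^ 2) / 2) : ℝ) : ℂ) *
      Complex.exp (Complex.I * ω * x)) volume := by
  apply AEStronglyMeasurable.mul
  apply AEStronglyMeasurable.mul
  apply AEStronglyMeasurable.mul hg
  · exact (Continuous.aestronglyMeasurable (by continuity))
  · exact (Continuous.aestronglyMeasurable (by continuity))
  · exact (Continuous.aestronglyMeasurable (by continuity))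

lemma int_EE (j : ℕ) (hWj : Integrable (fun ω : ℝ => ‖g ω‖ * |ω| ^ j)) (x σ : ℝ) :
    Integrable (fun ω : ℝ => g ω * (Complex.I * ω) ^ j *
      ((Real.exp (-(ω ^ 2 * σ ^ 2) / 2) : ℝ) : ℂ) * Complex.exp (Complex.I * ω * x)) := by
  apply Integrable.mono' hWj (meas_EE hg j x σ)
  exact Filter.Eventually.of_forall (fun ω => norm_EE_integrand g j x σ ω)

lemma int_ES (j : ℕ) (hWj : Integrable (fun ω : ℝ => ‖g ω‖ * |ω| ^ (j+1))) (x σ : ℝ) :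
    Integrable (fun ω : ℝ => g ω * (Complex.I * ω) ^ j *
      ((-(ω ^ 2 * σ) * Real.exp (-(ω ^ 2 * σ ^ 2) / 2) : ℝ) : ℂ) *
      Complex.exp (Complex.I * ω * x)) := by
  apply Integrable.mono' hWj (meas_ES hg j x σ)
  exact Filter.Eventually.of_forall (fun ω => norm_ES_integrand g j x σ ω)

lemma hasDerivAt_EE_x (j : ℕ) (hWj : Integrable (fun ω : ℝ => ‖g ω‖ * |ω| ^ j))
    (hWj1 : Integrable (fun ω : ℝ => ‖g ω‖ * |ω| ^ (j+1))) (σ x : ℝ) :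
    HasDerivAt (fun y => EE g j y σ) (EE g (j+1) x σ) x := by
  have key := hasDerivAt_integral_of_dominated_loc_of_deriv_le (μ := volume)
    (F := fun (y : ℝ) (ω : ℝ) => g ω * (Complex.I * ω) ^ j *
      ((Real.exp (-(ω ^ 2 * σ ^ 2) / 2) : ℝ) : ℂ) * Complex.exp (Complex.I * ω * y))
    (F' := fun (y : ℝ) (ω : ℝ) => g ω * (Complex.I * ω) ^ (j+1) *
      ((Real.exp (-(ω ^ 2 * σ ^ 2) / 2) : ℝ) : ℂ) * Complex.exp (Complex.I * ω * y))
    (x₀ := x) (bound := fun ω => ‖g ω‖ * |ω| ^ (j+1)) (s := Metric.ball x 1) (Metric.ball_mem_nhds x one_pos)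
    (Filter.Eventually.of_forall (fun y => meas_EE hg j y σ))
    (int_EE hg j hWj x σ) (meas_EE hg (j+1) x σ)
    (Filter.Eventually.of_forall (fun ω y _ => norm_EE_integrand g (j+1) y σ ω))
    hWj1
    (Filter.Eventually.of_forall (fun ω y _ => ?_))
  · exact key.2
  -- HasDerivAt in y of the integrand
  have h0 : HasDerivAt (fun y : ℝ => ((y : ℝ) : ℂ)) 1 y := by
    simpa using (hasDerivAt_id y).ofReal_comp
  have h1 : HasDerivAt (fun y : ℝ => Complex.I * (ω : ℂ) * ((y : ℝ) : ℂ))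
      (Complex.I * (ω : ℂ)) y := by
    simpa using h0.const_mul (Complex.I * (ω : ℂ))
  have h2 := h1.cexp
  have h3 := h2.const_mul (g ω * (Complex.I * ω) ^ j * ((Real.exp (-(ω ^ 2 * σ ^ 2) / 2) : ℝ) : ℂ))
  exact h3.congr_deriv (by ring)

lemma hasDerivAt_EE_sigma (j : ℕ) (hWj : Integrable (fun ω : ℝ => ‖g ω‖ * |ω| ^ j))
    (hWj1 : Integrable (fun ω : ℝ => ‖g ω‖ * |ω| ^ (j+1))) (x σ : ℝ) :
    HasDerivAt (fun s => EE g j x s) (ES g j x σ) σ := by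
  have key := hasDerivAt_integral_of_dominated_loc_of_deriv_le (μ := volume)
    (F := fun (s : ℝ) (ω : ℝ) => g ω * (Complex.I * ω) ^ j *
      ((Real.exp (-(ω ^ 2 * s ^ 2) / 2) : ℝ) : ℂ) * Complex.exp (Complex.I * ω * x))
    (F' := fun (s : ℝ) (ω : ℝ) => g ω * (Complex.I * ω) ^ j *
      ((-(ω ^ 2 * s) * Real.exp (-(ω ^ 2 * s ^ 2) / 2) : ℝ) : ℂ) *
      Complex.exp (Complex.I * ω * x))
    (x₀ := σ) (bound := fun ω => ‖g ω‖ * |ω| ^ (j+1)) (s := Metric.ball σ 1) (Metric.ball_mem_nhds σ one_pos)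
    (Filter.Eventually.of_forall (fun s => meas_EE hg j x s))
    (int_EE hg j hWj x σ) (meas_ES hg j x σ)
    (Filter.Eventually.of_forall (fun ω s _ => norm_ES_integrand g j x s ω))
    hWj1
    (Filter.Eventually.of_forall (fun ω s _ => ?_))
  · exact key.2
  -- HasDerivAt in s of the integrand
  have h0 : HasDerivAt (fun s : ℝ => -(ω ^ 2 * s ^ 2) / 2) (-(ω ^ 2 * s)) s := by
    have := ((hasDerivAt_pow 2 s).const_mul (ω ^ 2)).neg.div_const 2
    exact this.congr_deriv (by rw [show (2:ℕ) - 1 = 1 from rfl]; push_cast; ring)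
  have h1 := (h0.exp).ofReal_comp
  have h2 := h1.const_mul (g ω * (Complex.I * ω) ^ j)
  have h3 := h2.mul_const (Complex.exp (Complex.I * ω * x))
  exact h3.congr_deriv (by push_cast; ring)
end Core

noncomputable def PhiG (g : ℝ → ℂ) (x σ : ℝ) : ℝ :=
  (((1 / (2 * Real.pi) : ℝ) : ℂ) * EE g 0 x σ).re

lemma re_hasDerivAt {F : ℝ → ℂ} {F' : ℂ} {x : ℝ} (h : HasDerivAt F F' x) (cc : ℂ) :
    HasDerivAt (fun y => (cc * F y).re) ((cc * F').re) x := by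
  have h1 := h.const_mul cc
  have h2 := Complex.reCLM.hasFDerivAt.comp_hasDerivAt x h1
  exact h2

section Core2

variable {g : ℝ → ℂ} (hg : AEStronglyMeasurable g (volume : Measure ℝ))

include hg

lemma iter_x (K : ℕ) (hW : ∀ j, j ≤ K + 1 → Integrable (fun ω : ℝ => ‖g ω‖ * |ω| ^ j)) :
    ∀ j, j ≤ K → ∀ σ x, iteratedDeriv j (fun y => PhiG g y σ) x
      = (((1 / (2 * Real.pi) : ℝ) : ℂ) * EE g j x σ).re := by
  intro j
  induction j with
  | zero => intro _ σ x; simp [iteratedDeriv_zero, PhiG]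
  | succ j ih =>
    intro hj σ x
    rw [iteratedDeriv_succ]
    have hfun : iteratedDeriv j (fun y => PhiG g y σ)
        = fun y => (((1 / (2 * Real.pi) : ℝ) : ℂ) * EE g j y σ).re :=
      funext (fun y => ih (by omega) σ y)
    rw [hfun]
    exact (re_hasDerivAt
      (hasDerivAt_EE_x hg j (hW j (by omega)) (hW (j+1) (by omega)) σ x) _).deriv

lemma sigma_deriv (K : ℕ) (hW : ∀ j, j ≤ K + 1 → Integrable (fun ω : ℝ => ‖g ω‖ * |ω| ^ j))
    (x σ : ℝ) :
    deriv (fun s => iteratedDeriv K (fun y => PhiG g y s) x) σ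
      = (((1 / (2 * Real.pi) : ℝ) : ℂ) * ES g K x σ).re := by
  have hfun : (fun s => iteratedDeriv K (fun y => PhiG g y s) x)
      = fun s => (((1 / (2 * Real.pi) : ℝ) : ℂ) * EE g K x s).re :=
    funext (fun s => iter_x hg K hW K le_rfl s x)
  rw [hfun]
  exact (re_hasDerivAt
    (hasDerivAt_EE_sigma hg K (hW K (by omega)) (hW (K+1) (by omega)) x σ) _).deriv

end Core2

lemma lip_cexp (ω y y' : ℝ) :
    ‖Complex.exp (Complex.I * ω * y) - Complex.exp (Complex.I * ω * y')‖ ≤ |ω| * |y - y'| := by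
  have hder : ∀ z : ℝ, HasDerivAt (fun y : ℝ => Complex.exp (Complex.I * ω * y))
      (Complex.exp (Complex.I * ω * z) * (Complex.I * ω)) z := by
    intro z
    have h0 : HasDerivAt (fun y : ℝ => ((y : ℝ) : ℂ)) 1 z := by
      simpa using (hasDerivAt_id z).ofReal_comp
    have h1 : HasDerivAt (fun y : ℝ => Complex.I * (ω : ℂ) * ((y : ℝ) : ℂ))
        (Complex.I * (ω : ℂ)) z := by
      simpa using h0.const_mul (Complex.I * (ω : ℂ))
    exact h1.cexp
  have hlip : LipschitzWith (Real.nnabs ω) (fun y : ℝ => Complex.exp (Complex.I * ω * y)) := by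
    apply lipschitzWith_of_nnnorm_deriv_le (fun z => (hder z).differentiableAt)
    intro z
    rw [← NNReal.coe_le_coe, coe_nnnorm, (hder z).deriv, Real.coe_nnabs, norm_mul,
      norm_cexp_I_mul, one_mul, norm_mul, Complex.norm_I, one_mul, Complex.norm_real,
      Real.norm_eq_abs]
  have h := hlip.dist_le_mul y y'
  simpa [dist_eq_norm, Real.dist_eq, Real.coe_nnabs] using h

lemma lip_gauss (ω σ σ' : ℝ) :
    |Real.exp (-(ω ^ 2 * σ ^ 2) / 2) - Real.exp (-(ω ^ 2 * σ' ^ 2) / 2)| ≤ |ω| * |σ - σ'| := by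
  have hder : ∀ z : ℝ, HasDerivAt (fun s : ℝ => Real.exp (-(ω ^ 2 * s ^ 2) / 2))
      (Real.exp (-(ω ^ 2 * z ^ 2) / 2) * (-(ω ^ 2 * z))) z := by
    intro z
    have h0 : HasDerivAt (fun s : ℝ => -(ω ^ 2 * s ^ 2) / 2) (-(ω ^ 2 * z)) z := by
      have := ((hasDerivAt_pow 2 z).const_mul (ω ^ 2)).neg.div_const 2
      exact this.congr_deriv (by rw [show (2:ℕ) - 1 = 1 from rfl]; push_cast; ring)
    exact h0.exp
  have hlip : LipschitzWith (Real.nnabs ω) (fun s : ℝ => Real.exp (-(ω ^ 2 * s ^ 2) / 2)) := by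
    apply lipschitzWith_of_nnnorm_deriv_le (fun z => (hder z).differentiableAt)
    intro z
    rw [← NNReal.coe_le_coe, coe_nnnorm, (hder z).deriv, Real.coe_nnabs, Real.norm_eq_abs]
    rw [mul_comm]
    exact gauss_sigma_le ω z
  have h := hlip.dist_le_mul σ σ'
  simpa [Real.dist_eq, Real.coe_nnabs] using h

lemma lip_gsig (ω σ σ' : ℝ) :
    |(-(ω ^ 2 * σ) * Real.exp (-(ω ^ 2 * σ ^ 2) / 2))
      - (-(ω ^ 2 * σ') * Real.exp (-(ω ^ 2 * σ' ^ 2) / 2))| ≤ ω ^ 2 * |σ - σ'| := by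
  have hder : ∀ z : ℝ, HasDerivAt (fun s : ℝ => -(ω ^ 2 * s) * Real.exp (-(ω ^ 2 * s ^ 2) / 2))
      (-(ω ^ 2) * Real.exp (-(ω ^ 2 * z ^ 2) / 2)
        + -(ω ^ 2 * z) * (Real.exp (-(ω ^ 2 * z ^ 2) / 2) * (-(ω ^ 2 * z)))) z := by
    intro z
    have hA : HasDerivAt (fun s : ℝ => -(ω ^ 2 * s)) (-(ω ^ 2)) z := by
      exact ((hasDerivAt_id z).const_mul (ω ^ 2)).neg.congr_deriv (by ring)
    have hB : HasDerivAt (fun s : ℝ => Real.exp (-(ω ^ 2 * s ^ 2) / 2))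
        (Real.exp (-(ω ^ 2 * z ^ 2) / 2) * (-(ω ^ 2 * z))) z := by
      have h0 : HasDerivAt (fun s : ℝ => -(ω ^ 2 * s ^ 2) / 2) (-(ω ^ 2 * z)) z := by
        have := ((hasDerivAt_pow 2 z).const_mul (ω ^ 2)).neg.div_const 2
        exact this.congr_deriv (by rw [show (2:ℕ) - 1 = 1 from rfl]; push_cast; ring)
      exact h0.exp
    exact hA.mul hB
  have hlip : LipschitzWith (Real.toNNReal (ω ^ 2))
      (fun s : ℝ => -(ω ^ 2 * s) * Real.exp (-(ω ^ 2 * s ^ 2) / 2)) := by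
    apply lipschitzWith_of_nnnorm_deriv_le (fun z => (hder z).differentiableAt)
    intro z
    rw [← NNReal.coe_le_coe, coe_nnnorm, (hder z).deriv, Real.norm_eq_abs,
      Real.coe_toNNReal _ (sq_nonneg ω)]
    have e1 : -(ω ^ 2) * Real.exp (-(ω ^ 2 * z ^ 2) / 2)
        + -(ω ^ 2 * z) * (Real.exp (-(ω ^ 2 * z ^ 2) / 2) * (-(ω ^ 2 * z)))
        = ω ^ 2 * (((ω * z) ^ 2 - 1) * Real.exp (-((ω * z) ^ 2) / 2)) := by
      rw [show -((ω * z) ^ 2) / 2 = -(ω ^ 2 * z ^ 2) / 2 by ring]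
      ring
    rw [e1, abs_mul, abs_of_nonneg (sq_nonneg ω), abs_mul,
      _root_.abs_of_nonneg (Real.exp_nonneg _)]
    calc ω ^ 2 * (|(ω * z) ^ 2 - 1| * Real.exp (-((ω * z) ^ 2) / 2)) ≤ ω ^ 2 * 1 :=
          mul_le_mul_of_nonneg_left (helper2 (ω * z)) (sq_nonneg ω)
      _ = ω ^ 2 := mul_one _
  have h := hlip.dist_le_mul σ σ'
  rw [Real.dist_eq, Real.dist_eq] at h
  rw [show (-(ω ^ 2 * σ) * Real.exp (-(ω ^ 2 * σ ^ 2) / 2))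
      - (-(ω ^ 2 * σ') * Real.exp (-(ω ^ 2 * σ' ^ 2) / 2))
      = -((ω ^ 2 * σ * Real.exp (-(ω ^ 2 * σ ^ 2) / 2))
      - (ω ^ 2 * σ' * Real.exp (-(ω ^ 2 * σ' ^ 2) / 2))) by ring, abs_neg]
  calc |ω ^ 2 * σ * Real.exp (-(ω ^ 2 * σ ^ 2) / 2)
        - ω ^ 2 * σ' * Real.exp (-(ω ^ 2 * σ' ^ 2) / 2)|
      = |(-(ω ^ 2 * σ) * Real.exp (-(ω ^ 2 * σ ^ 2) / 2))
        - (-(ω ^ 2 * σ') * Real.exp (-(ω ^ 2 * σ' ^ 2) / 2))| := by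
        rw [show (-(ω ^ 2 * σ) * Real.exp (-(ω ^ 2 * σ ^ 2) / 2))
          - (-(ω ^ 2 * σ') * Real.exp (-(ω ^ 2 * σ' ^ 2) / 2))
          = -((ω ^ 2 * σ * Real.exp (-(ω ^ 2 * σ ^ 2) / 2))
          - (ω ^ 2 * σ' * Real.exp (-(ω ^ 2 * σ' ^ 2) / 2))) by ring, abs_neg]
    _ ≤ (Real.toNNReal (ω ^ 2) : ℝ) * |σ - σ'| := h
    _ = ω ^ 2 * |σ - σ'| := by rw [Real.coe_toNNReal _ (sq_nonneg ω)]

lemma EE_pointwise (g : ℝ → ℂ) (j : ℕ) (x σ x' σ' ω : ℝ) :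
    ‖g ω * (Complex.I * ω) ^ j * ((Real.exp (-(ω ^ 2 * σ ^ 2) / 2) : ℝ) : ℂ) *
        Complex.exp (Complex.I * ω * x)
      - g ω * (Complex.I * ω) ^ j * ((Real.exp (-(ω ^ 2 * σ' ^ 2) / 2) : ℝ) : ℂ) *
        Complex.exp (Complex.I * ω * x')‖
    ≤ (‖g ω‖ * |ω| ^ (j+1)) * (|σ - σ'| + |x - x'|) := by
  rw [show g ω * (Complex.I * ω) ^ j * ((Real.exp (-(ω ^ 2 * σ ^ 2) / 2) : ℝ) : ℂ) *
        Complex.exp (Complex.I * ω * x)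
      - g ω * (Complex.I * ω) ^ j * ((Real.exp (-(ω ^ 2 * σ' ^ 2) / 2) : ℝ) : ℂ) *
        Complex.exp (Complex.I * ω * x')
      = (g ω * (Complex.I * ω) ^ j) *
        (((Real.exp (-(ω ^ 2 * σ ^ 2) / 2) : ℝ) : ℂ) * Complex.exp (Complex.I * ω * x)
        - ((Real.exp (-(ω ^ 2 * σ' ^ 2) / 2) : ℝ) : ℂ) * Complex.exp (Complex.I * ω * x')) by ring,
    norm_mul, norm_mul, norm_I_omega_pow]
  have key : ‖((Real.exp (-(ω ^ 2 * σ ^ 2) / 2) : ℝ) : ℂ) * Complex.exp (Complex.I * ω * x)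
      - ((Real.exp (-(ω ^ 2 * σ' ^ 2) / 2) : ℝ) : ℂ) * Complex.exp (Complex.I * ω * x')‖
      ≤ |ω| * (|σ - σ'| + |x - x'|) := by
    rw [show ((Real.exp (-(ω ^ 2 * σ ^ 2) / 2) : ℝ) : ℂ) * Complex.exp (Complex.I * ω * x)
        - ((Real.exp (-(ω ^ 2 * σ' ^ 2) / 2) : ℝ) : ℂ) * Complex.exp (Complex.I * ω * x')
        = (((Real.exp (-(ω ^ 2 * σ ^ 2) / 2) : ℝ) : ℂ)
            - ((Real.exp (-(ω ^ 2 * σ' ^ 2) / 2) : ℝ) : ℂ)) * Complex.exp (Complex.I * ω * x)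
          + ((Real.exp (-(ω ^ 2 * σ' ^ 2) / 2) : ℝ) : ℂ) *
            (Complex.exp (Complex.I * ω * x) - Complex.exp (Complex.I * ω * x')) by ring]
    refine (norm_add_le _ _).trans ?_
    rw [norm_mul, norm_mul, norm_cexp_I_mul, mul_one, ← Complex.ofReal_sub,
      Complex.norm_real, Real.norm_eq_abs, Complex.norm_real, Real.norm_eq_abs,
      _root_.abs_of_nonneg (Real.exp_nonneg _)]
    have h3 := lip_gauss ω σ σ'
    have h4 := lip_cexp ω x x'
    have h5 : Real.exp (-(ω ^ 2 * σ' ^ 2) / 2) ≤ 1 := gauss_le_one _ (by positivity)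
    calc |Real.exp (-(ω ^ 2 * σ ^ 2) / 2) - Real.exp (-(ω ^ 2 * σ' ^ 2) / 2)|
          + Real.exp (-(ω ^ 2 * σ' ^ 2) / 2) *
            ‖Complex.exp (Complex.I * ω * x) - Complex.exp (Complex.I * ω * x')‖
        ≤ |ω| * |σ - σ'| + 1 * (|ω| * |x - x'|) := by
          refine add_le_add h3 ?_
          exact mul_le_mul h5 h4 (norm_nonneg _) one_pos.le
      _ = |ω| * (|σ - σ'| + |x - x'|) := by ring
  calc ‖g ω‖ * |ω| ^ j * ‖_ - _‖
      ≤ ‖g ω‖ * |ω| ^ j * (|ω| * (|σ - σ'| + |x - x'|)) :=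
        mul_le_mul_of_nonneg_left key (by positivity)
    _ = (‖g ω‖ * |ω| ^ (j+1)) * (|σ - σ'| + |x - x'|) := by rw [pow_succ]; ring

lemma ES_pointwise (g : ℝ → ℂ) (j : ℕ) (x σ x' σ' ω : ℝ) :
    ‖g ω * (Complex.I * ω) ^ j * ((-(ω ^ 2 * σ) * Real.exp (-(ω ^ 2 * σ ^ 2) / 2) : ℝ) : ℂ) *
        Complex.exp (Complex.I * ω * x)
      - g ω * (Complex.I * ω) ^ j * ((-(ω ^ 2 * σ') * Real.exp (-(ω ^ 2 * σ' ^ 2) / 2) : ℝ) : ℂ) *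
        Complex.exp (Complex.I * ω * x')‖
    ≤ (‖g ω‖ * |ω| ^ (j+2)) * (|σ - σ'| + |x - x'|) := by
  rw [show g ω * (Complex.I * ω) ^ j * ((-(ω ^ 2 * σ) * Real.exp (-(ω ^ 2 * σ ^ 2) / 2) : ℝ) : ℂ) *
        Complex.exp (Complex.I * ω * x)
      - g ω * (Complex.I * ω) ^ j * ((-(ω ^ 2 * σ') * Real.exp (-(ω ^ 2 * σ' ^ 2) / 2) : ℝ) : ℂ) *
        Complex.exp (Complex.I * ω * x')
      = (g ω * (Complex.I * ω) ^ j) *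
        (((-(ω ^ 2 * σ) * Real.exp (-(ω ^ 2 * σ ^ 2) / 2) : ℝ) : ℂ) *
            Complex.exp (Complex.I * ω * x)
        - ((-(ω ^ 2 * σ') * Real.exp (-(ω ^ 2 * σ' ^ 2) / 2) : ℝ) : ℂ) *
            Complex.exp (Complex.I * ω * x')) by ring,
    norm_mul, norm_mul, norm_I_omega_pow]
  have key : ‖((-(ω ^ 2 * σ) * Real.exp (-(ω ^ 2 * σ ^ 2) / 2) : ℝ) : ℂ) *
        Complex.exp (Complex.I * ω * x)
      - ((-(ω ^ 2 * σ') * Real.exp (-(ω ^ 2 * σ' ^ 2) / 2) : ℝ) : ℂ) *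
        Complex.exp (Complex.I * ω * x')‖
      ≤ ω ^ 2 * (|σ - σ'| + |x - x'|) := by
    rw [show ((-(ω ^ 2 * σ) * Real.exp (-(ω ^ 2 * σ ^ 2) / 2) : ℝ) : ℂ) *
          Complex.exp (Complex.I * ω * x)
        - ((-(ω ^ 2 * σ') * Real.exp (-(ω ^ 2 * σ' ^ 2) / 2) : ℝ) : ℂ) *
          Complex.exp (Complex.I * ω * x')
        = (((-(ω ^ 2 * σ) * Real.exp (-(ω ^ 2 * σ ^ 2) / 2) : ℝ) : ℂ)
            - ((-(ω ^ 2 * σ') * Real.exp (-(ω ^ 2 * σ' ^ 2) / 2) : ℝ) : ℂ)) *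
            Complex.exp (Complex.I * ω * x)
          + ((-(ω ^ 2 * σ') * Real.exp (-(ω ^ 2 * σ' ^ 2) / 2) : ℝ) : ℂ) *
            (Complex.exp (Complex.I * ω * x) - Complex.exp (Complex.I * ω * x')) by ring]
    refine (norm_add_le _ _).trans ?_
    rw [norm_mul, norm_mul, norm_cexp_I_mul, mul_one, ← Complex.ofReal_sub,
      Complex.norm_real, Real.norm_eq_abs, Complex.norm_real, Real.norm_eq_abs]
    have h3 := lip_gsig ω σ σ'
    have h4 := lip_cexp ω x x'
    have h5 := gauss_sigma_le ω σ'
    calc |(-(ω ^ 2 * σ) * Real.exp (-(ω ^ 2 * σ ^ 2) / 2))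
          - (-(ω ^ 2 * σ') * Real.exp (-(ω ^ 2 * σ' ^ 2) / 2))|
          + |(-(ω ^ 2 * σ') * Real.exp (-(ω ^ 2 * σ' ^ 2) / 2))| *
            ‖Complex.exp (Complex.I * ω * x) - Complex.exp (Complex.I * ω * x')‖
        ≤ ω ^ 2 * |σ - σ'| + |ω| * (|ω| * |x - x'|) := by
          refine add_le_add h3 ?_
          exact mul_le_mul h5 h4 (norm_nonneg _) (abs_nonneg _)
      _ = ω ^ 2 * (|σ - σ'| + |x - x'|) := by rw [← mul_assoc, ← sq_abs]; ring
  calc ‖g ω‖ * |ω| ^ j * ‖_ - _‖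
      ≤ ‖g ω‖ * |ω| ^ j * (ω ^ 2 * (|σ - σ'| + |x - x'|)) :=
        mul_le_mul_of_nonneg_left key (by positivity)
    _ = (‖g ω‖ * |ω| ^ (j+2)) * (|σ - σ'| + |x - x'|) := by
        rw [pow_add, ← sq_abs ω]; ring

section Core3

variable {g : ℝ → ℂ} (hg : AEStronglyMeasurable g (volume : Measure ℝ))

include hg

lemma EE_diff (j : ℕ) (hWj : Integrable (fun ω : ℝ => ‖g ω‖ * |ω| ^ j))
    (hWj1 : Integrable (fun ω : ℝ => ‖g ω‖ * |ω| ^ (j+1))) (x σ x' σ' : ℝ) :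
    ‖EE g j x σ - EE g j x' σ'‖
      ≤ (∫ ω : ℝ, ‖g ω‖ * |ω| ^ (j+1)) * (|σ - σ'| + |x - x'|) := by
  rw [EE, EE, ← integral_sub (int_EE hg j hWj x σ) (int_EE hg j hWj x' σ')]
  refine (norm_integral_le_of_norm_le (hWj1.mul_const (|σ - σ'| + |x - x'|))
    (Filter.Eventually.of_forall fun ω => EE_pointwise g j x σ x' σ' ω)).trans ?_
  exact le_of_eq (integral_mul_const _ _)

lemma ES_diff (j : ℕ) (hWj1 : Integrable (fun ω : ℝ => ‖g ω‖ * |ω| ^ (j+1)))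
    (hWj2 : Integrable (fun ω : ℝ => ‖g ω‖ * |ω| ^ (j+2))) (x σ x' σ' : ℝ) :
    ‖ES g j x σ - ES g j x' σ'‖
      ≤ (∫ ω : ℝ, ‖g ω‖ * |ω| ^ (j+2)) * (|σ - σ'| + |x - x'|) := by
  rw [ES, ES, ← integral_sub (int_ES hg j hWj1 x σ) (int_ES hg j hWj1 x' σ')]
  refine (norm_integral_le_of_norm_le (hWj2.mul_const (|σ - σ'| + |x - x'|))
    (Filter.Eventually.of_forall fun ω => ES_pointwise g j x σ x' σ' ω)).trans ?_
  exact le_of_eq (integral_mul_const _ _)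

end Core3

section Core4

variable {g : ℝ → ℂ} (hg : AEStronglyMeasurable g (volume : Measure ℝ))

include hg

lemma lip_V (k : ℕ) (hW : ∀ j, j ≤ k + 2 → Integrable (fun ω : ℝ => ‖g ω‖ * |ω| ^ j)) :
    LipschitzWith (Real.toNNReal (‖((1 / (2 * Real.pi) : ℝ) : ℂ)‖ *
      ((∫ ω : ℝ, ‖g ω‖ * |ω| ^ (k+2)) * 2)))
      (fun q : ℝ × ℝ => ((-((((1 / (2 * Real.pi) : ℝ) : ℂ) * ES g k q.1 q.2).re),
        ((((1 / (2 * Real.pi) : ℝ) : ℂ) * EE g (k+1) q.1 q.2).re)) : ℝ × ℝ)) := by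
  set cc : ℂ := ((1 / (2 * Real.pi) : ℝ) : ℂ) with hcc
  set I2 : ℝ := ∫ ω : ℝ, ‖g ω‖ * |ω| ^ (k+2) with hI2def
  have hI2 : 0 ≤ I2 := by
    rw [hI2def]; exact integral_nonneg (fun ω => by positivity)
  apply LipschitzWith.of_dist_le_mul
  intro q q'
  have habs : ∀ z z' : ℂ, |(cc * z).re - (cc * z').re| ≤ ‖cc‖ * ‖z - z'‖ := by
    intro z z'
    have h1 : (cc * z).re - (cc * z').re = (cc * (z - z')).re := by
      rw [mul_sub, Complex.sub_re]
    rw [h1]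
    refine (Complex.abs_re_le_norm _).trans ?_
    rw [norm_mul]
  have hx : |q.1 - q'.1| ≤ dist q q' := by
    rw [Prod.dist_eq, ← Real.dist_eq]; exact le_max_left _ _
  have hσ : |q.2 - q'.2| ≤ dist q q' := by
    rw [Prod.dist_eq, ← Real.dist_eq]; exact le_max_right _ _
  have hdist0 : (0:ℝ) ≤ dist q q' := dist_nonneg
  rw [Real.coe_toNNReal _ (by positivity), Prod.dist_eq]
  apply max_le
  · calc dist (-((cc * ES g k q.1 q.2).re)) (-((cc * ES g k q'.1 q'.2).re))
        = |(cc * ES g k q.1 q.2).re - (cc * ES g k q'.1 q'.2).re| := by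
          rw [dist_neg_neg, Real.dist_eq]
      _ ≤ ‖cc‖ * ‖ES g k q.1 q.2 - ES g k q'.1 q'.2‖ := habs _ _
      _ ≤ ‖cc‖ * (I2 * (|q.2 - q'.2| + |q.1 - q'.1|)) := by
          refine mul_le_mul_of_nonneg_left ?_ (norm_nonneg _)
          exact ES_diff hg k (hW (k+1) (by omega)) (hW (k+2) le_rfl) q.1 q.2 q'.1 q'.2
      _ ≤ ‖cc‖ * (I2 * (dist q q' + dist q q')) := by
          refine mul_le_mul_of_nonneg_left
            (mul_le_mul_of_nonneg_left (add_le_add hσ hx) hI2) (norm_nonneg _)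
      _ = ‖cc‖ * (I2 * 2) * dist q q' := by ring
  · calc dist ((cc * EE g (k+1) q.1 q.2).re) ((cc * EE g (k+1) q'.1 q'.2).re)
        = |(cc * EE g (k+1) q.1 q.2).re - (cc * EE g (k+1) q'.1 q'.2).re| := Real.dist_eq _ _
      _ ≤ ‖cc‖ * ‖EE g (k+1) q.1 q.2 - EE g (k+1) q'.1 q'.2‖ := habs _ _
      _ ≤ ‖cc‖ * (I2 * (|q.2 - q'.2| + |q.1 - q'.1|)) := by
          refine mul_le_mul_of_nonneg_left ?_ (norm_nonneg _)
          exact EE_diff hg (k+1) (hW (k+1) (by omega)) (hW (k+2) le_rfl) q.1 q.2 q'.1 q'.2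
      _ ≤ ‖cc‖ * (I2 * (dist q q' + dist q q')) := by
          refine mul_le_mul_of_nonneg_left
            (mul_le_mul_of_nonneg_left (add_le_add hσ hx) hI2) (norm_nonneg _)
      _ = ‖cc‖ * (I2 * 2) * dist q q' := by ring

end Core4

/-- Lemma 3.4: the vector field `(-∂^{k+1}Ψ_p^θ/∂x^k∂σ, ∂^{k+1}Ψ_p^θ/∂x^{k+1})` is
globally Lipschitz and complete. -/
theorem stmt19 (l m : ℕ) (hl : 0 < l) (hm : 0 < m) (p : ℝ) (hp : 0 < p)
    (hmp : p + 1 + 2 * (l : ℝ) < (m : ℝ))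
    (f : ℝ → ℝ) (hf : HypH m f)
    (hxf : MeasureTheory.Integrable (fun x : ℝ => x * f x))
    (θ : Theta) (c d : ℝ) (hc : c ≠ 0) (hd : d ≠ 0)
    (hF : ∀ ω : ℝ, FT (Lam θ p) ω =
      Mker θ c d p ω * ((Real.exp (-(ω ^ 2) / 2) : ℝ) : ℂ))
    (k : ℕ) (hk : k + 2 ≤ 2 * l) :
    (∃ K : NNReal, LipschitzWith K (fun q : ℝ × ℝ =>
      ((-(deriv (fun s => iteratedDeriv k (fun y => Psi f θ c d p y s) q.1) q.2),
        iteratedDeriv (k + 1) (fun y => Psi f θ c d p y q.2) q.1) : ℝ × ℝ))) ∧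
    ∀ q₀ : ℝ × ℝ, ∃ γ : ℝ → ℝ × ℝ, γ 0 = q₀ ∧ ∀ t : ℝ,
      HasDerivAt γ
        ((-(deriv (fun s => iteratedDeriv k (fun y => Psi f θ c d p y s) (γ t).1) (γ t).2),
          iteratedDeriv (k + 1) (fun y => Psi f θ c d p y (γ t).2) (γ t).1) : ℝ × ℝ) t := by
  classical
  have hfint : Integrable f := by
    simpa [iteratedDeriv_zero] using hf.2 0 (Nat.zero_le m)
  set cc : ℂ := ((1 / (2 * Real.pi) : ℝ) : ℂ) with hcc
  set g : ℝ → ℂ := fun ω => FT f ω * Mker θ c d p ω with hgdef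
  have hMmeas : AEStronglyMeasurable (fun ω => Mker θ c d p ω) (volume : Measure ℝ) := by
    cases θ
    · apply Continuous.aestronglyMeasurable
      show Continuous fun ω : ℝ => (((c * |ω| ^ p : ℝ)) : ℂ)
      exact Complex.continuous_ofReal.comp
        (continuous_const.mul (continuous_abs.rpow_const (fun x => Or.inr hp.le)))
    · apply Measurable.aestronglyMeasurable
      show Measurable fun ω : ℝ =>
        Complex.I * (d : ℂ) * ((Real.sign ω : ℝ) : ℂ) * ((|ω| ^ p : ℝ) : ℂ)
      have hsign : Measurable Real.sign := by
        unfold Real.sign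
        exact Measurable.ite (measurableSet_lt measurable_id' measurable_const) measurable_const
          (Measurable.ite (measurableSet_lt measurable_const measurable_id')
            measurable_const measurable_const)
      exact (measurable_const.mul (Complex.measurable_ofReal.comp hsign)).mul
        ((Complex.continuous_ofReal.comp
          (continuous_abs.rpow_const (fun x => Or.inr hp.le))).measurable)
  have hgmeas : AEStronglyMeasurable g (volume : Measure ℝ) :=
    ((FT_cont f hfint).aestronglyMeasurable).mul hMmeas
  have hMbound : ∀ ω : ℝ, ‖Mker θ c d p ω‖ ≤ (max |c| |d|) * |ω| ^ p := by
    intro ω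
    have hrp : (0:ℝ) ≤ |ω| ^ p := Real.rpow_nonneg (abs_nonneg _) _
    cases θ
    · show ‖(((c * |ω| ^ p : ℝ)) : ℂ)‖ ≤ _
      rw [Complex.norm_real, Real.norm_eq_abs, abs_mul, _root_.abs_of_nonneg hrp]
      exact mul_le_mul_of_nonneg_right (le_max_left _ _) hrp
    · show ‖Complex.I * (d : ℂ) * ((Real.sign ω : ℝ) : ℂ) * ((|ω| ^ p : ℝ) : ℂ)‖ ≤ _
      have hs : |Real.sign ω| ≤ 1 := by
        rcases Real.sign_apply_eq ω with h | h | h <;> rw [h] <;> norm_num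
      simp only [norm_mul, Complex.norm_I, one_mul, Complex.norm_real, Real.norm_eq_abs]
      rw [_root_.abs_of_nonneg hrp]
      calc |d| * |Real.sign ω| * |ω| ^ p ≤ |d| * 1 * |ω| ^ p :=
            mul_le_mul_of_nonneg_right (mul_le_mul_of_nonneg_left hs (abs_nonneg _)) hrp
        _ = |d| * |ω| ^ p := by ring
        _ ≤ (max |c| |d|) * |ω| ^ p := mul_le_mul_of_nonneg_right (le_max_right _ _) hrp
  have hW : ∀ j, j ≤ k + 2 → Integrable (fun ω : ℝ => ‖g ω‖ * |ω| ^ j) := by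
    intro j hj
    have hpj : (0:ℝ) < p + j := by positivity
    have hjl : (j:ℝ) ≤ 2 * (l:ℝ) := by
      have : j ≤ 2 * l := le_trans hj hk
      exact_mod_cast this
    have hpjm : p + j < (m:ℝ) - 1 := by linarith
    have hint := (integrable_FT_weight hf.1 hf.2 (p + j) hpj hpjm).const_mul (max |c| |d|)
    apply Integrable.mono' hint
    · exact hgmeas.norm.mul (Continuous.aestronglyMeasurable (continuous_abs.pow j))
    · apply Filter.Eventually.of_forall
      intro ω
      rw [Real.norm_eq_abs, _root_.abs_of_nonneg (by positivity)]
      have h1 : ‖g ω‖ ≤ ‖FT f ω‖ * ((max |c| |d|) * |ω| ^ p) := by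
        calc ‖g ω‖ = ‖FT f ω‖ * ‖Mker θ c d p ω‖ := norm_mul _ _
          _ ≤ ‖FT f ω‖ * ((max |c| |d|) * |ω| ^ p) :=
            mul_le_mul_of_nonneg_left (hMbound ω) (norm_nonneg _)
      calc ‖g ω‖ * |ω| ^ j ≤ (‖FT f ω‖ * ((max |c| |d|) * |ω| ^ p)) * |ω| ^ j :=
            mul_le_mul_of_nonneg_right h1 (by positivity)
        _ = (max |c| |d|) * (‖FT f ω‖ * (|ω| ^ p * |ω| ^ ((j:ℕ):ℝ))) := by
            rw [Real.rpow_natCast]; ring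
        _ = (max |c| |d|) * (‖FT f ω‖ * |ω| ^ (p + (j:ℝ))) := by
            rw [← Real.rpow_add' (abs_nonneg _) (by positivity)]
  have hPsiPhi : ∀ σ0 : ℝ, (fun y => Psi f θ c d p y σ0) = fun y => PhiG g y σ0 := by
    intro σ0
    funext y
    simp only [Psi, PhiG, EE, hgdef, pow_zero, mul_one]
  have hIter : ∀ j, j ≤ k + 1 → ∀ σ0 x0 : ℝ,
      iteratedDeriv j (fun y => Psi f θ c d p y σ0) x0 = (cc * EE g j x0 σ0).re := by
    intro j hj σ0 x0
    rw [hPsiPhi σ0]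
    exact iter_x hgmeas (k+1) (fun i hi => hW i (by omega)) j hj σ0 x0
  have hSig : ∀ x0 σ0 : ℝ,
      deriv (fun s => iteratedDeriv k (fun y => Psi f θ c d p y s) x0) σ0
        = (cc * ES g k x0 σ0).re := by
    intro x0 σ0
    have h : (fun s => iteratedDeriv k (fun y => Psi f θ c d p y s) x0)
        = (fun s => iteratedDeriv k (fun y => PhiG g y s) x0) := by
      funext s; rw [hPsiPhi s]
    rw [h]
    exact sigma_deriv hgmeas k (fun i hi => hW i (by omega)) x0 σ0
  have hlip := lip_V hgmeas k hW
  have hVfun : (fun q : ℝ × ℝ =>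
      ((-(deriv (fun s => iteratedDeriv k (fun y => Psi f θ c d p y s) q.1) q.2),
        iteratedDeriv (k + 1) (fun y => Psi f θ c d p y q.2) q.1) : ℝ × ℝ))
      = (fun q : ℝ × ℝ => ((-((cc * ES g k q.1 q.2).re),
          ((cc * EE g (k+1) q.1 q.2).re)) : ℝ × ℝ)) := by
    funext q
    rw [hSig q.1 q.2, hIter (k+1) le_rfl q.2 q.1]
  constructor
  · refine ⟨(‖cc‖ * ((∫ ω : ℝ, ‖g ω‖ * |ω| ^ (k+2)) * 2)).toNNReal, ?_⟩
    rw [hVfun]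
    exact hlip
  · intro q₀
    obtain ⟨γ, hγ0, hγd⟩ := lipschitz_global_flow hlip q₀
    refine ⟨γ, hγ0, fun t => ?_⟩
    have h := hγd t
    rw [show ((-(deriv (fun s => iteratedDeriv k (fun y => Psi f θ c d p y s) (γ t).1) (γ t).2),
        iteratedDeriv (k + 1) (fun y => Psi f θ c d p y (γ t).2) (γ t).1) : ℝ × ℝ)
      = ((-((cc * ES g k (γ t).1 (γ t).2).re),
          ((cc * EE g (k+1) (γ t).1 (γ t).2).re)) : ℝ × ℝ) from congrFun hVfun (γ t)]
    exact h
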